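/- Let P1 be a probability measure on a measurable space 𝔜, let q: 𝔜 → ℝ be measurable with 0 < ∫ e^q dP1 < ∞, let p ∈ (0,1), let P0 be the probability measure with dP0 = e^q dP1 / ∫ e^q dP1, let P = (1−p)·P0 + p·P1, and define η ∈ ℝ by e^η = ((1−p)/p)/∫ e^q dP1. Then p = ∫ 1/(1 + e^{η+q(y)}) dP(y), and for every measurable set A ⊆ 𝔜, P1(A) = (1/p) · ∫_A 1/(1 + e^{η+q(y)}) dP(y). -/

import Mathlib

open MeasureTheory Real

/-- With `P0` the tilted version of `P1`, `P = (1-p)·P0 + p·P1` and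
`e^η = ((1-p)/p)/∫ e^q dP1`, we have `p = ∫ 1/(1+e^{η+q}) dP` and
`P1(A) = (1/p) ∫_A 1/(1+e^{η+q}) dP` for every measurable `A`. -/
theorem observed_distribution_representation
    {𝔜 : Type*} [MeasurableSpace 𝔜]
    (P1 : Measure 𝔜) [IsProbabilityMeasure P1]
    (q : 𝔜 → ℝ) (hq : Measurable q)
    (hint : Integrable (fun y => Real.exp (q y)) P1)
    (hpos : 0 < ∫ y, Real.exp (q y) ∂P1)
    (p : ℝ) (hp : p ∈ Set.Ioo (0 : ℝ) 1)
    (P0 : Measure 𝔜)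
    (hP0 : P0 = P1.withDensity
      (fun y => ENNReal.ofReal (Real.exp (q y) / ∫ z, Real.exp (q z) ∂P1)))
    (P : Measure 𝔜)
    (hP : P = ENNReal.ofReal (1 - p) • P0 + ENNReal.ofReal p • P1)
    (η : ℝ)
    (hη : Real.exp η = ((1 - p) / p) / ∫ z, Real.exp (q z) ∂P1) :
    p = ∫ y, 1 / (1 + Real.exp (η + q y)) ∂P ∧
    ∀ A : Set 𝔜, MeasurableSet A →
      P1 A = ENNReal.ofReal
        ((1 / p) * ∫ y in A, 1 / (1 + Real.exp (η + q y)) ∂P) := by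
  obtain ⟨hp0, hp1⟩ := hp
  set c : ℝ := ∫ z, Real.exp (q z) ∂P1 with hc_def
  have hc : 0 < c := hpos
  set g : 𝔜 → ℝ := fun y => 1 / (1 + Real.exp (η + q y)) with hg_def
  have hg_meas : Measurable g :=
    Measurable.div measurable_const (measurable_const.add ((measurable_const.add hq).exp))
  have hden_pos : ∀ y, 0 < 1 + Real.exp (η + q y) := fun y => by positivity
  have hg_nonneg : ∀ y, 0 ≤ g y := fun y => by simp only [hg_def]; positivity
  have hg_le_one : ∀ y, g y ≤ 1 := fun y => by
    simp only [hg_def]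
    rw [div_le_one (hden_pos y)]
    nlinarith [Real.exp_pos (η + q y)]
  -- key pointwise identity
  have hkey : ∀ y, (1 - p) * (Real.exp (q y) / c * g y) + p * g y = p := by
    intro y
    have h1 : Real.exp (η + q y) = ((1 - p) / p / c) * Real.exp (q y) := by
      rw [Real.exp_add, hη]
    have hgy : g y * (1 + Real.exp (η + q y)) = 1 := by
      simp only [hg_def]; field_simp
    rw [h1] at hgy
    have hexp := Real.exp_pos (q y)
    field_simp at hgy ⊢
    nlinarith [hgy]
  -- density as NNReal
  set f : 𝔜 → NNReal := fun y => (Real.exp (q y) / c).toNNReal with hf_def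
  have hf_meas : Measurable f := Measurable.real_toNNReal (hq.exp.div_const c)
  have hf_coe : ∀ y, (f y : ℝ) = Real.exp (q y) / c := fun y => by
    simp only [hf_def]
    exact Real.coe_toNNReal _ (by positivity)
  have hP0' : P0 = P1.withDensity (fun y => (f y : ENNReal)) := by rw [hP0]; congr 1
  -- integrabilities
  have hg_int_P1 : Integrable g P1 := by
    apply Integrable.mono (integrable_const (1 : ℝ)) hg_meas.aestronglyMeasurable
    filter_upwards with y
    rw [Real.norm_eq_abs, abs_of_nonneg (hg_nonneg y), norm_one]
    exact hg_le_one y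
  have hfg_int_P1 : Integrable (fun y => Real.exp (q y) / c * g y) P1 := by
    apply Integrable.mono (hint.div_const c)
      ((hq.exp.div_const c).mul hg_meas).aestronglyMeasurable
    filter_upwards with y
    have h1 : 0 ≤ Real.exp (q y) / c := by positivity
    rw [Real.norm_eq_abs, Real.norm_eq_abs, Pi.mul_apply, abs_of_nonneg (mul_nonneg h1 (hg_nonneg y)),
      abs_of_nonneg h1]
    calc Real.exp (q y) / c * g y ≤ Real.exp (q y) / c * 1 :=
          mul_le_mul_of_nonneg_left (hg_le_one y) h1
      _ = Real.exp (q y) / c := mul_one _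
  have hg_int_P0 : Integrable g P0 := by
    rw [hP0', integrable_withDensity_iff_integrable_smul hf_meas]
    apply hfg_int_P1.congr
    filter_upwards with y
    rw [NNReal.smul_def, smul_eq_mul, hf_coe]
  -- the key set-integral computation
  have key : ∀ A : Set 𝔜, MeasurableSet A →
      ∫ y in A, g y ∂P = p * (P1 A).toReal := by
    intro A hA
    have h0 : ∫ y in A, g y ∂P0 = ∫ y in A, Real.exp (q y) / c * g y ∂P1 := by
      rw [hP0', setIntegral_withDensity_eq_setIntegral_smul hf_meas g hA]
      apply integral_congr_ae
      filter_upwards with y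
      rw [NNReal.smul_def, smul_eq_mul, hf_coe]
    rw [hP, Measure.restrict_add, Measure.restrict_smul, Measure.restrict_smul,
      integral_add_measure
        (hg_int_P0.restrict.smul_measure ENNReal.ofReal_ne_top)
        (hg_int_P1.restrict.smul_measure ENNReal.ofReal_ne_top),
      integral_smul_measure, integral_smul_measure,
      ENNReal.toReal_ofReal (by linarith : (0:ℝ) ≤ 1 - p),
      ENNReal.toReal_ofReal hp0.le, smul_eq_mul, smul_eq_mul, h0]
    rw [← integral_const_mul, ← integral_const_mul, ← integral_add
      (hfg_int_P1.restrict.const_mul _) (hg_int_P1.restrict.const_mul _)]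
    have : ∫ y in A, ((1 - p) * (Real.exp (q y) / c * g y) + p * g y) ∂P1
        = ∫ y in A, p ∂P1 := by
      apply integral_congr_ae
      filter_upwards with y using hkey y
    rw [this, setIntegral_const, smul_eq_mul, mul_comm, measureReal_def]
  constructor
  · have := key Set.univ MeasurableSet.univ
    rw [Measure.restrict_univ, measure_univ, ENNReal.toReal_one, mul_one] at this
    exact this.symm
  · intro A hA
    rw [key A hA, ← mul_assoc, one_div, inv_mul_cancel₀ hp0.ne', one_mul,
      ENNReal.ofReal_toReal (measure_ne_top P1 A)]
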